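/- In the ensemble-selection problem with strictly positive scores, if x is a score-optimal solution among feasible 0-1 vectors with at most k ones, and x violates the average-mass constraint, then the optimal feasible solution satisfying the average constraint is still optimal for the ILP obtained by adding the single constraint ∑_{i ∈ supp(x)} x_i ≤ |supp(x)| − 1 (excluding exactly the solution x). -/
import Mathlib


/-- Suppose `x` is score-optimal among feasible selections (conflict-free, at most `k` ships)
with all scores strictly positive, and `x` violates the average-mass constraint. Then the
cardinality cut `∑_{i ∈ supp x} x_i ≤ |supp x| − 1` excludes exactly the solution `x` from the
feasible set, and consequently a solution `z` that is optimal among feasible selections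
satisfying the average constraint remains optimal for the ILP with the added cut. -/
theorem cut_excludes_exactly_x_and_preserves_optimum
    {ι : Type*} [Fintype ι] [DecidableEq ι]
    (s m : ι → ℝ) (hs : ∀ i, 0 < s i)
    (Conflict : ι → ι → Prop)
    (k : ℕ)
    (Feasible : Finset ι → Prop)
    (hFeas : ∀ I : Finset ι,
      Feasible I ↔ ((∀ i ∈ I, ∀ j ∈ I, i ≠ j → ¬Conflict i j) ∧ I.card ≤ k))
    (AvgOK : Finset ι → Prop)
    (c : ℕ → ℝ)
    (hAvg : ∀ I : Finset ι, AvgOK I ↔ c I.card ≤ (∑ i ∈ I, m i) / I.card)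
    (x : Finset ι) (hxne : x.Nonempty) (hx : Feasible x)
    (hxopt : ∀ y : Finset ι, Feasible y → ∑ i ∈ y, s i ≤ ∑ i ∈ x, s i)
    (hxbad : ¬AvgOK x)
    (z : Finset ι) (hz : Feasible z) (hzavg : AvgOK z)
    (hzopt : ∀ y : Finset ι, Feasible y → AvgOK y → ∑ i ∈ y, s i ≤ ∑ i ∈ z, s i) :
    (∀ y : Finset ι, Feasible y → ((y ∩ x).card ≤ x.card - 1 ↔ y ≠ x)) ∧
    (Feasible z ∧ (z ∩ x).card ≤ x.card - 1 ∧
      ∀ y : Finset ι, Feasible y → (y ∩ x).card ≤ x.card - 1 → AvgOK y →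
        ∑ i ∈ y, s i ≤ ∑ i ∈ z, s i) := by
  have key : ∀ y : Finset ι, Feasible y → ((y ∩ x).card ≤ x.card - 1 ↔ y ≠ x) := by
    intro y hy
    constructor
    · rintro h rfl
      rw [Finset.inter_self] at h
      have : 1 ≤ y.card := Finset.card_pos.mpr hxne
      omega
    · intro hne
      have h1 : 1 ≤ x.card := Finset.card_pos.mpr hxne
      by_contra hle
      have hcard : (y ∩ x).card = x.card := by
        have := Finset.card_le_card (Finset.inter_subset_right (s₁ := y) (s₂ := x))
        omega
      have hsub : x ⊆ y := by
        have : y ∩ x = x := Finset.eq_of_subset_of_card_le Finset.inter_subset_right (by omega)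
        intro i hi
        rw [← this] at hi
        exact (Finset.mem_inter.mp hi).1
      have hss : x ⊂ y := hsub.ssubset_of_ne (Ne.symm hne)
      have hlt : ∑ i ∈ x, s i < ∑ i ∈ y, s i :=
        Finset.sum_lt_sum_of_subset hsub (i := (Finset.exists_of_ssubset hss).choose)
          (Finset.exists_of_ssubset hss).choose_spec.1
          (Finset.exists_of_ssubset hss).choose_spec.2
          (hs _) (fun i _ _ => (hs i).le)
      exact absurd (hxopt y hy) (not_le.mpr hlt)
  refine ⟨key, hz, (key z hz).mpr ?_, fun y hy _ hyavg => hzopt y hy hyavg⟩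
  rintro rfl
  exact hxbad hzavg
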